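/- If X ⊆ [ω]^ω is a Σ^1_2 inextendible linearly ordered tower and there is no analytic inextendible linearly ordered tower, then X has a cofinal subset of size ω₁: writing X = ⋃_{ξ<ω₁} B_ξ as a union of ω₁ Borel sets, each B_ξ (being a Borel subset of a ⊆*-linear order without being inextendible itself) has a lower bound x_ξ ∈ X, and {x_ξ : ξ < ω₁} is cofinal in X. -/

import Mathlib

abbrev Cantor : Type := ℕ → Bool

def cset (x : Cantor) : Set ℕ := {n | x n = true}

def AlmostSub (a b : Set ℕ) : Prop := (a \ b).Finite

/-- `X` is `Σ¹₂`: the projection of a coanalytic subset of `Cantor × ω^ω`. -/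
def IsSigma12 (X : Set Cantor) : Prop :=
  ∃ Y : Set (Cantor × (ℕ → ℕ)), MeasureTheory.AnalyticSet Yᶜ ∧
    X = {x | ∃ w, (x, w) ∈ Y}

/-- `X` is an inextendible linearly ordered tower (ilt): a set of infinite subsets of `ω`,
linearly ordered by `⊆*`, with no pseudointersection. -/
def IsIlt (X : Set Cantor) : Prop :=
  (∀ x ∈ X, (cset x).Infinite) ∧
  (∀ x ∈ X, ∀ y ∈ X, AlmostSub (cset x) (cset y) ∨ AlmostSub (cset y) (cset x)) ∧
  ¬ ∃ z : Set ℕ, z.Infinite ∧ ∀ x ∈ X, AlmostSub z (cset x)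

open Set MeasureTheory

namespace IltProof

abbrev Baire : Type := ℕ → ℕ
abbrev Z : Type := Cantor × Baire

/-- Basic clopen subset of Baire space given by a finite sequence. -/
def Ns (s : List ℕ) : Set Baire := {g | ∀ i, (h : i < s.length) → g i = s[i]}

lemma Ns_anti {s t : List ℕ} (h : s <+: t) : Ns t ⊆ Ns s := by
  intro g hg i hi
  rw [hg i (hi.trans_le h.length_le)]
  exact (h.getElem hi).symm

def br (g : Baire) (n : ℕ) : List ℕ := List.ofFn fun i : Fin n => g i

@[simp] lemma br_length (g : Baire) (n : ℕ) : (br g n).length = n := by simp [br]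

lemma br_getElem (g : Baire) (n i : ℕ) (h : i < (br g n).length) : (br g n)[i] = g i := by
  simp [br]

lemma br_succ (g : Baire) (n : ℕ) : br g (n + 1) = br g n ++ [g n] := by
  rw [br, List.ofFn_succ']
  simp [br, List.concat_eq_append]

lemma mem_Ns_br (g : Baire) (n : ℕ) : g ∈ Ns (br g n) :=
  fun i h => (br_getElem g n i h).symm

lemma exists_basic {V : Set Baire} (hV : IsOpen V) {g : Baire} (hg : g ∈ V) :
    ∃ n, ∀ h : Baire, (∀ i < n, h i = g i) → h ∈ V := by
  obtain ⟨I, u, hu, hsub⟩ := isOpen_pi_iff.1 hV g hg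
  refine ⟨(I.sup id) + 1, fun h hh => hsub ?_⟩
  intro a ha
  rw [hh a (Nat.lt_succ_of_le (Finset.le_sup (f := id) ha))]
  exact (hu a ha).2

section F
variable (F : Baire → Z)

def T (y : Z) (s : List ℕ) : Prop := y ∈ closure (F '' Ns s)

lemma T_anti {y : Z} {s t : List ℕ} (h : s <+: t) (ht : T F y t) : T F y s :=
  closure_mono (image_mono (Ns_anti h)) ht

lemma T_of_eq {g : Baire} {y : Z} (hy : F g = y) (n : ℕ) : T F y (br g n) :=
  subset_closure ⟨g, mem_Ns_br g n, hy⟩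

lemma eq_of_branch (hF : Continuous F) {g : Baire} {y : Z}
    (hbr : ∀ n, T F y (br g n)) : F g = y := by
  by_contra hne
  obtain ⟨U, W, hU, hW, hFgU, hyW, hUW⟩ := t2_separation hne
  obtain ⟨n, hn⟩ := exists_basic (hF.isOpen_preimage U hU) (show g ∈ F ⁻¹' U from hFgU)
  have h1 : F '' Ns (br g n) ⊆ U := by
    rintro _ ⟨h', hh', rfl⟩
    exact hn h' fun i hi => by
      rw [hh' i (by simpa using hi)]; exact br_getElem g n i (by simpa using hi)
  have h2 : y ∈ closure U := closure_mono h1 (hbr n)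
  have h3 : closure U ⊆ Wᶜ := closure_minimal hUW.subset_compl_right hW.isClosed_compl
  exact h3 h2 hyW

lemma exists_branch {y : Z} (s : ℕ → List ℕ)
    (hstep : ∀ k, ∃ n, s (k + 1) = s k ++ [n])
    (hT : ∀ k, T F y (s (k + 1))) : ∃ g, ∀ m, T F y (br g m) := by
  have hlen : ∀ k, (s k).length = (s 0).length + k := by
    intro k
    induction k with
    | zero => rfl
    | succ k ih =>
      obtain ⟨n, hn⟩ := hstep k
      rw [hn, List.length_append, ih]
      simp [Nat.add_assoc]
  have hpre : ∀ j k, j ≤ k → s j <+: s k := by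
    intro j k hjk
    induction hjk with
    | refl => exact List.prefix_refl _
    | @step k' h ih =>
      obtain ⟨n, hn⟩ := hstep k'
      rw [hn]
      exact ih.trans (List.prefix_append _ _)
  have hilen : ∀ i : ℕ, i < (s (i + 1)).length := by
    intro i; rw [hlen]; omega
  refine ⟨fun i => (s (i + 1)).getD i 0, fun m => ?_⟩
  have hbr : br (fun i => (s (i + 1)).getD i 0) m = (s (m + 1)).take m := by
    apply List.ext_getElem
    · rw [br_length, List.length_take, hlen]; omega
    · intro i h1 h2
      rw [br_getElem, List.getElem_take, List.getD_eq_getElem _ _ (hilen i)]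
      have : i + 1 ≤ m + 1 := by
        rw [br_length] at h1; omega
      exact (hpre (i + 1) (m + 1) this).getElem (hilen i)
  refine T_anti F ?_ (hT m)
  rw [hbr]
  exact List.take_prefix _ _


end F

noncomputable section Pieces

lemma exists_pieces (Y : Set Z) (F : Baire → Z) (hF : Continuous F)
    (hrange : range F = Yᶜ) :
    ∃ A : (Cardinal.aleph 1 : Cardinal.{0}).ord.ToType → Set Cantor,
      (∀ i, AnalyticSet (A i)) ∧
      (∀ i, ∀ x ∈ A i, ∃ w, (x, w) ∈ Y) ∧
      (∀ x : Cantor, (∃ w, (x, w) ∈ Y) → ∃ i, x ∈ A i) := by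
  classical
  haveI : PolishSpace (Z × Baire) := instPolishSpaceOfSeparableSpaceOfIsCompletelyMetrizableSpace
  set κ : Type := (Cardinal.aleph 1 : Cardinal.{0}).ord.ToType with hκ
  have hcnt : ∀ i : κ, Countable ↥(Set.Iio i) := by
    intro i
    exact ((Cardinal.countable_iff_lt_aleph_one _).2 (Cardinal.mk_Iio_ord_toType i)).to_subtype
  have hι : ∀ i : κ, ∃ f : ↥(Set.Iio i) → ℕ, Function.Injective f := fun i =>
    Countable.exists_injective_nat _
  choose ι hιinj using hι
  set e : List ℕ ≃ ℕ := Denumerable.eqv (List ℕ) with he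
  set D : κ → ℕ → ℕ → Prop := fun i m k =>
    ∃ a b : ↥(Set.Iio i), ι i a = m ∧ ι i b = k ∧ (a : κ) < (b : κ) with hD
  set S : κ → Set (Z × Baire) := fun i =>
    ⋂ (t : List ℕ) (n : ℕ),
      ((Prod.fst ⁻¹' closure (F '' Ns (t ++ [n])))ᶜ ∪
        {p : Z × Baire | D i (p.2 (e (t ++ [n]))) (p.2 (e t))}) with hS
  have mem_S : ∀ i p, p ∈ S i ↔
      ∀ t n, T F p.1 (t ++ [n]) → D i (p.2 (e (t ++ [n]))) (p.2 (e t)) := by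
    intro i p
    simp only [hS, Set.mem_iInter, Set.mem_union, Set.mem_compl_iff, Set.mem_preimage,
      Set.mem_setOf_eq]
    refine forall₂_congr fun t n => ?_
    rw [← imp_iff_not_or]
    rfl
  have hSmeas : ∀ i, MeasurableSet (S i) := by
    intro i
    refine MeasurableSet.iInter fun t => MeasurableSet.iInter fun n => MeasurableSet.union ?_ ?_
    · exact (isClosed_closure.measurableSet.preimage measurable_fst).compl
    · have : {p : Z × Baire | D i (p.2 (e (t ++ [n]))) (p.2 (e t))} =
          (fun p : Z × Baire => (p.2 (e (t ++ [n])), p.2 (e t))) ⁻¹'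
            {q : ℕ × ℕ | D i q.1 q.2} := rfl
      rw [this]
      exact (((measurable_pi_apply _).comp measurable_snd).prodMk
        ((measurable_pi_apply _).comp measurable_snd)) ((Set.to_countable _).measurableSet)
  refine ⟨fun i => (fun p : Z × Baire => p.1.1) '' S i, ?_, ?_, ?_⟩
  · intro i
    exact ((hSmeas i).analyticSet).image_of_continuous (continuous_fst.comp continuous_fst)
  · -- soundness
    rintro i x ⟨p, hp, rfl⟩
    refine ⟨p.1.2, ?_⟩
    by_contra hpY
    have hmem : p.1 ∈ range F := by rw [hrange]; exact hpY
    obtain ⟨g₀, hg₀⟩ := hmem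
    have hbr : ∀ n, T F p.1 (br g₀ n) := T_of_eq F hg₀
    have key : ∀ m, D i (p.2 (e (br g₀ m ++ [g₀ m]))) (p.2 (e (br g₀ m))) := by
      intro m
      refine (mem_S i p).1 hp (br g₀ m) (g₀ m) ?_
      rw [← br_succ]; exact hbr (m + 1)
    choose a b ha hb hab using key
    have hba : ∀ m, b (m + 1) = a m := by
      intro m
      apply hιinj i
      rw [ha m, hb (m + 1), br_succ]
    have hdesc : ∀ m, ((b (m + 1) : κ)) < (b m : κ) := by
      intro m; rw [hba m]; exact hab m
    obtain ⟨z, ⟨m₀, rfl⟩, hmin⟩ :=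
      (wellFounded_lt (α := κ)).has_min (Set.range fun m => (b m : κ)) ⟨_, 0, rfl⟩
    exact hmin _ ⟨m₀ + 1, rfl⟩ (hdesc m₀)
  · -- coverage
    rintro x ⟨w, hw⟩
    set y : Z := (x, w) with hy
    set r : List ℕ → List ℕ → Prop := fun t s => (∃ n, t = s ++ [n]) ∧ T F y t with hr
    have hwfr : WellFounded r := by
      by_contra hwf
      have hex : ∃ s, ¬ Acc r s := by
        by_contra h
        push_neg at h
        exact hwf ⟨h⟩
      have step : ∀ s : {s // ¬ Acc r s}, ∃ t : {s // ¬ Acc r s}, r t.1 s.1 := by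
        rintro ⟨s, hs⟩
        have : ∃ t, ¬ Acc r t ∧ r t s := by
          by_contra h
          push_neg at h
          exact hs (Acc.intro s fun t ht => not_not.1 fun htt => h t htt ht)
        obtain ⟨t, ht1, ht2⟩ := this
        exact ⟨⟨t, ht1⟩, ht2⟩
      choose f hf using step
      obtain ⟨s0, hs0⟩ := hex
      have hseq : ∀ k, r ((f^[k + 1] ⟨s0, hs0⟩).1) ((f^[k] ⟨s0, hs0⟩).1) := by
        intro k
        rw [Function.iterate_succ']
        exact hf _
      obtain ⟨g, hg⟩ := exists_branch F (fun k => (f^[k] ⟨s0, hs0⟩).1)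
        (fun k => (hseq k).1) (fun k => (hseq k).2)
      have h1 : F g = y := eq_of_branch F hF hg
      have h2 : y ∈ range F := ⟨g, h1⟩
      rw [hrange] at h2
      exact h2 hw
    haveI : IsWellFounded (List ℕ) r := ⟨hwfr⟩
    have homega : Order.IsSuccLimit ((Cardinal.aleph 1 : Cardinal.{0}).ord) :=
      Cardinal.isSuccLimit_ord (Cardinal.aleph0_le_aleph 1)
    have hcof : (Cardinal.aleph0 : Cardinal.{0}) < ((Cardinal.aleph 1 : Cardinal.{0}).ord).cof := by
      rw [Cardinal.isRegular_aleph_one.cof_eq]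
      exact Cardinal.aleph0_lt_aleph_one
    have hρlt : ∀ s, IsWellFounded.rank r s < (Cardinal.aleph 1 : Cardinal.{0}).ord := by
      intro s
      refine hwfr.induction
        (C := fun u => IsWellFounded.rank r u < (Cardinal.aleph 1 : Cardinal.{0}).ord)
        s fun t ih => ?_
      show IsWellFounded.rank r t < (Cardinal.aleph 1 : Cardinal.{0}).ord
      rw [IsWellFounded.rank_eq]
      refine Ordinal.iSup_lt_ord ?_ fun b => ?_
      · exact lt_of_le_of_lt
          ((Cardinal.mk_subtype_le _).trans_eq (Cardinal.mk_denumerable _)) hcof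
      · exact homega.succ_lt (ih b b.2)
    have hξ : (⨆ s : List ℕ, Order.succ (IsWellFounded.rank r s)) <
        (Cardinal.aleph 1 : Cardinal.{0}).ord := by
      refine Ordinal.iSup_lt_ord ?_ fun s => homega.succ_lt (hρlt s)
      exact lt_of_le_of_lt (le_of_eq (Cardinal.mk_denumerable _)) hcof
    have hρξ : ∀ s, IsWellFounded.rank r s < ⨆ s : List ℕ, Order.succ (IsWellFounded.rank r s) :=
      fun s => lt_of_lt_of_le (Order.lt_succ _) (Ordinal.le_iSup _ s)
    set EI := (Ordinal.ToType.mk (o := (Cardinal.aleph 1 : Cardinal.{0}).ord)) with hEI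
    set i : κ := EI ⟨_, hξ⟩ with hi
    have hai : ∀ s : List ℕ,
        (EI ⟨IsWellFounded.rank r s, (hρξ s).trans hξ⟩ : κ) ∈ Set.Iio i := by
      intro s
      exact EI.lt_iff_lt.2 (Subtype.mk_lt_mk.2 (hρξ s))
    set a : List ℕ → ↥(Set.Iio i) :=
      fun s => ⟨EI ⟨IsWellFounded.rank r s, (hρξ s).trans hξ⟩, hai s⟩ with hadef
    have halt : ∀ t u : List ℕ, r t u → (a t : κ) < (a u : κ) := by
      intro t u h
      exact EI.lt_iff_lt.2 (Subtype.mk_lt_mk.2 (IsWellFounded.rank_lt_of_rel h))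
    set g : Baire := fun k => ι i (a (e.symm k)) with hg
    refine ⟨i, ⟨(y, g), ?_, rfl⟩⟩
    rw [mem_S]
    intro t n hT
    refine ⟨a (t ++ [n]), a t, ?_, ?_, ?_⟩
    · rw [hg]; simp
    · rw [hg]; simp
    · exact halt _ _ ⟨⟨n, rfl⟩, hT⟩

end Pieces

lemma almostSub_trans {a b c : Set ℕ} (h1 : AlmostSub a b) (h2 : AlmostSub b c) :
    AlmostSub a c := by
  have hsub : a \ c ⊆ (a \ b) ∪ (b \ c) := by
    intro n hn
    by_cases hb : n ∈ b
    · exact Or.inr ⟨hb, hn.2⟩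
    · exact Or.inl ⟨hn.1, hb⟩
  exact (h1.union h2).subset hsub

end IltProof

/-- If `X` is a `Σ¹₂` ilt and no analytic set is an ilt, then `X` has a cofinal subset of
size `ω₁`. -/
theorem sigma12_ilt_cofinal_omega1 (X : Set Cantor)
    (hX : IsSigma12 X) (hilt : IsIlt X)
    (hnoan : ∀ A : Set Cantor, MeasureTheory.AnalyticSet A → ¬ IsIlt A) :
    ∃ Y : Set Cantor, Y ⊆ X ∧ Cardinal.mk Y = Cardinal.aleph 1 ∧
      ∀ x ∈ X, ∃ y ∈ Y, AlmostSub (cset y) (cset x) := by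
  classical
  obtain ⟨Y, hYc, hXY⟩ := hX
  rw [MeasureTheory.AnalyticSet] at hYc
  rcases hYc with hempty | ⟨F, hF, hrange⟩
  · exfalso
    have hYuniv : Y = Set.univ := by rwa [Set.compl_empty_iff] at hempty
    have hmem : (fun _ => false : Cantor) ∈ X := by
      rw [hXY]
      exact ⟨fun _ => 0, by rw [hYuniv]; trivial⟩
    have hinf := hilt.1 _ hmem
    have hcs : cset (fun _ => false) = ∅ := by ext n; simp [cset]
    rw [hcs] at hinf
    exact Set.not_infinite.2 Set.finite_empty hinf
  · obtain ⟨A, hAan, hAsub, hAcov⟩ := IltProof.exists_pieces Y F hF hrange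
    have hAX : ∀ i, A i ⊆ X := fun i x hx => by
      rw [hXY]; exact hAsub i x hx
    have hlow : ∀ i, ∃ xl ∈ X, ∀ a ∈ A i, AlmostSub (cset xl) (cset a) := by
      intro i
      have hni := hnoan (A i) (hAan i)
      have hz : ∃ z : Set ℕ, z.Infinite ∧ ∀ a ∈ A i, AlmostSub z (cset a) := by
        by_contra hno
        exact hni ⟨fun a ha => hilt.1 a (hAX i ha),
          fun a ha b hb => hilt.2.1 a (hAX i ha) b (hAX i hb), hno⟩
      obtain ⟨z, hzinf, hzsub⟩ := hz
      by_contra hno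
      push_neg at hno
      refine hilt.2.2 ⟨z, hzinf, fun x hx => ?_⟩
      obtain ⟨a, ha, hna⟩ := hno x hx
      have hab : AlmostSub (cset a) (cset x) :=
        (hilt.2.1 x hx a (hAX i ha)).resolve_left hna
      exact IltProof.almostSub_trans (hzsub a ha) hab
    choose xl hxlX hxllow using hlow
    have hXunc : ¬ X.Countable := by
      intro hc
      have hms : MeasurableSet X := by
        have hXeq : X = ⋃ x ∈ X, {x} := by simp
        rw [hXeq]
        exact MeasurableSet.biUnion hc fun x _ => isClosed_singleton.measurableSet
      haveI : PolishSpace Cantor := instPolishSpaceOfSeparableSpaceOfIsCompletelyMetrizableSpace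
      exact hnoan X hms.analyticSet hilt
    have h1 : Cardinal.aleph 1 ≤ Cardinal.mk X := by
      by_contra h
      exact hXunc ((Cardinal.countable_iff_lt_aleph_one _).2 (lt_of_not_ge h))
    obtain ⟨p, hp⟩ := Cardinal.le_mk_iff_exists_set.1 h1
    have e2 : Cardinal.mk ↥(Subtype.val '' p : Set Cantor) = Cardinal.aleph 1 := by
      rw [Cardinal.mk_image_eq Subtype.val_injective, hp]
    refine ⟨Set.range xl ∪ Subtype.val '' p, ?_, ?_, ?_⟩
    · rintro x (⟨i, rfl⟩ | ⟨⟨x', hx'⟩, _, rfl⟩)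
      · exact hxlX i
      · exact hx'
    · refine le_antisymm ?_ ?_
      · refine (Cardinal.mk_union_le _ _).trans ?_
        have e1 : Cardinal.mk ↥(Set.range xl) ≤ Cardinal.aleph 1 := by
          refine Cardinal.mk_range_le.trans ?_
          rw [Cardinal.mk_toType, Cardinal.card_ord]
        calc Cardinal.mk ↥(Set.range xl) + Cardinal.mk ↥(Subtype.val '' p : Set Cantor)
            ≤ Cardinal.aleph 1 + Cardinal.aleph 1 := add_le_add e1 (le_of_eq e2)
          _ = Cardinal.aleph 1 := Cardinal.add_eq_self (Cardinal.aleph0_le_aleph 1)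
      · have h3 := Cardinal.mk_le_mk_of_subset
          (Set.subset_union_right (s := Set.range xl) (t := Subtype.val '' p))
        rwa [e2] at h3
    · intro x hx
      obtain ⟨i, hi⟩ := hAcov x (by rw [hXY] at hx; exact hx)
      exact ⟨xl i, Or.inl ⟨i, rfl⟩, hxllow i x hi⟩
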